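/- Suppose n = Σ_{i=1}^{m} δ_i · F_i is the Zeckendorf decomposition of n (each δ_i ∈ {0,1}, no two consecutive indices have δ_i = δ_{i+1} = 1, and δ_m = 1). Then Σ_{j=1}^{m} (F_{j+2} - j - 2)·δ_j ≤ ((√5+3)/2)·n - Σ_{j=1}^{m} j·δ_j - ((1+√5)/2)·Σ_{j=1}^{m} δ_j, as real numbers. -/

import Mathlib

open Real

local notation "φ" => goldenRatio
local notation "ψ" => goldenConj

private lemma fibE : ∀ k, (Nat.fib (k + 2) : ℝ) = φ ^ 2 * Nat.fib k + ψ ^ k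
  | 0 => by simp
  | 1 => by
      simp [Nat.fib, goldenRatio_sq]
      linarith [goldenRatio_add_goldenConj]
  | (k + 2) => by
      have h1 := fibE k
      have h2 := fibE (k + 1)
      have h3 : (Nat.fib (k + 4) : ℝ) = (Nat.fib (k + 3) : ℝ) + (Nat.fib (k + 2) : ℝ) := by
        rw [show k + 4 = (k + 2) + 2 by ring, Nat.fib_add_two]; push_cast; ring
      have hf2 : (Nat.fib (k + 2) : ℝ) = (Nat.fib (k + 1) : ℝ) + (Nat.fib k : ℝ) := by
        rw [Nat.fib_add_two]; push_cast; ring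
      have hpsi : ψ ^ (k + 2) = ψ ^ (k + 1) + ψ ^ k := by
        have h := goldenConj_sq
        calc ψ ^ (k + 2) = ψ ^ k * ψ ^ 2 := by ring
        _ = ψ ^ k * (ψ + 1) := by rw [h]
        _ = ψ ^ (k + 1) + ψ ^ k := by ring
      rw [show k + 2 + 2 = k + 4 by ring, show k + 1 + 2 = k + 3 by ring] at *
      linear_combination h3 + h2 + h1 - hpsi - φ ^ 2 * hf2

private lemma psi_pow_le (k : ℕ) : ψ ^ (k + 2) ≤ ψ ^ 2 := by
  have h1 : ψ ^ (k + 2) = ψ ^ 2 * ψ ^ k := by ring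
  have hsq : (0:ℝ) < ψ ^ 2 := even_two.pow_pos goldenConj_ne_zero
  have habs : |ψ| < 1 := abs_lt.2 ⟨neg_one_lt_goldenConj, goldenConj_neg.trans one_pos⟩
  have : ψ ^ k ≤ 1 := by
    calc ψ ^ k ≤ |ψ ^ k| := le_abs_self _
    _ = |ψ| ^ k := by rw [abs_pow]
    _ ≤ 1 := pow_le_one₀ (abs_nonneg _) habs.le
  nlinarith

private lemma key (j : ℕ) (hj : 1 ≤ j) :
    (Nat.fib (j + 3) : ℝ) - j - 2 ≤ φ ^ 2 * Nat.fib (j + 1) - j - φ := by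
  have h := fibE (j + 1)
  rw [show j + 3 = (j + 1) + 2 by ring, h]
  obtain ⟨k, rfl⟩ := Nat.exists_eq_add_of_le hj
  have hp := psi_pow_le k
  have : ψ ^ 2 + φ = 2 := by
    have := goldenRatio_add_goldenConj
    rw [goldenConj_sq]; linarith
  rw [show 1 + k + 1 = k + 2 by ring]
  push_cast
  linarith

theorem zeckendorf_game_upper_bound (n m : ℕ) (δ : ℕ → ℕ)
    (hδ : ∀ i, δ i ≤ 1) (hnc : ∀ i, δ i * δ (i + 1) = 0) (hm : δ m = 1)
    (hsum : n = ∑ i ∈ Finset.Icc 1 m, δ i * Nat.fib (i + 1)) :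
    ∑ j ∈ Finset.Icc 1 m, ((Nat.fib (j + 3) : ℝ) - j - 2) * (δ j : ℝ)
      ≤ ((Real.sqrt 5 + 3) / 2) * (n : ℝ)
        - ∑ j ∈ Finset.Icc 1 m, (j : ℝ) * (δ j : ℝ)
        - ((1 + Real.sqrt 5) / 2) * ∑ j ∈ Finset.Icc 1 m, (δ j : ℝ) := by
  have hc : (Real.sqrt 5 + 3) / 2 = φ ^ 2 := by
    rw [goldenRatio_sq]; unfold goldenRatio; ring
  have hphi : (1 + Real.sqrt 5) / 2 = φ := rfl
  rw [hc, hphi, hsum]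
  push_cast
  rw [Finset.mul_sum, Finset.mul_sum, ← Finset.sum_sub_distrib, ← Finset.sum_sub_distrib]
  apply Finset.sum_le_sum
  intro j hj
  have hj1 : 1 ≤ j := (Finset.mem_Icc.1 hj).1
  have := key j hj1
  have hδj : (0:ℝ) ≤ (δ j : ℝ) := Nat.cast_nonneg _
  nlinarith [this, hδj]
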